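/- Let F be a field, let X be a finite-dimensional F-vector space, let (w_i)_{i∈I} be a basis of X indexed by a finite set I, and let (v_i)_{i∈I} be an arbitrary family of vectors of X. Then the set of scalars λ ∈ F for which the family (w_i + λ·v_i)_{i∈I} is not a basis of X is finite of cardinality at most |I|. -/

import Mathlib

/-- Let `F` be a field, `X` a finite-dimensional `F`-vector space, `(w i)` a basis of `X`
indexed by a finite type `I`, and `(v i)` an arbitrary family of vectors.  Then the set of
scalars `λ` for which the family `(w i + λ • v i)` fails to be a basis is finite, of
cardinality at most `|I|`. -/
theorem stmt1 (F : Type*) [Field F] (X : Type*) [AddCommGroup X] [Module F X]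
    [FiniteDimensional F X] (I : Type*) [Fintype I] (w : Module.Basis I F X) (v : I → X) :
    {lam : F | ¬ (LinearIndependent F (fun i => w i + lam • v i) ∧
        Submodule.span F (Set.range fun i => w i + lam • v i) = ⊤)}.Finite ∧
      {lam : F | ¬ (LinearIndependent F (fun i => w i + lam • v i) ∧
        Submodule.span F (Set.range fun i => w i + lam • v i) = ⊤)}.ncard ≤ Fintype.card I := by
  classical
  set A : Matrix I I F := w.toMatrix v with hA
  set p : Polynomial F :=
    Matrix.det ((Polynomial.X : Polynomial F) • A.map Polynomial.C +
      (1 : Matrix I I F).map Polynomial.C) with hp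
  have hdeg : p.natDegree ≤ Fintype.card I := Polynomial.natDegree_det_X_add_C_le A 1
  have heval : ∀ lam : F, p.eval lam = w.det (fun i => w i + lam • v i) := by
    intro lam
    have h2 := RingHom.map_det (Polynomial.evalRingHom lam)
      ((Polynomial.X : Polynomial F) • A.map Polynomial.C +
        (1 : Matrix I I F).map Polynomial.C)
    rw [hp, show ∀ q : Polynomial F, q.eval lam = (Polynomial.evalRingHom lam) q
      from fun _ => rfl, h2, Module.Basis.det_apply]
    congr 1
    ext i j
    simp only [RingHom.mapMatrix_apply, Matrix.map_apply, Matrix.add_apply,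
      Matrix.smul_apply, smul_eq_mul, Polynomial.eval_add, Polynomial.eval_mul,
      Polynomial.eval_X, Polynomial.eval_C, Module.Basis.toMatrix_apply, hA, map_add,
      map_smul, Module.Basis.repr_self_apply, Matrix.one_apply, Finsupp.coe_add,
      Finsupp.coe_smul, Pi.add_apply, Pi.smul_apply, Polynomial.coe_evalRingHom]
    by_cases h : i = j <;> simp [h, eq_comm, mul_comm, add_comm]
  have hp0 : p ≠ 0 := by
    intro h
    have h1 : p.eval 0 = 1 := by
      rw [heval 0]
      simp
      exact w.det_self
    rw [h] at h1
    simp at h1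
  have hsub : {lam : F | ¬ (LinearIndependent F (fun i => w i + lam • v i) ∧
      Submodule.span F (Set.range fun i => w i + lam • v i) = ⊤)} ⊆
      ↑p.roots.toFinset := by
    intro lam hlam
    simp only [Set.mem_setOf_eq] at hlam
    have hz : p.eval lam = 0 := by
      by_contra h
      exact hlam ((Module.Basis.is_basis_iff_det w).mpr (by rw [← heval lam]; exact isUnit_iff_ne_zero.mpr h))
    simp [Polynomial.mem_roots, hp0, Polynomial.IsRoot, hz]
  refine ⟨Set.Finite.subset (Finset.finite_toSet _) hsub, ?_⟩
  calc _ ≤ (p.roots.toFinset : Set F).ncard := Set.ncard_le_ncard hsub (Finset.finite_toSet _)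
    _ = p.roots.toFinset.card := by simp [Set.ncard_coe_finset]
    _ ≤ p.roots.card := p.roots.toFinset_card_le
    _ ≤ p.natDegree := p.card_roots'
    _ ≤ Fintype.card I := hdeg
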